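/- arXiv:1110.2338 — 2 statements merged into one kernel-verified Lean document; each statement's English description precedes it below -/
import Mathlib

section
/- For all complex numbers s, t, the projective point with homogeneous coordinates (x : y : z : w) = (t² − 1 : i(t² − 1 − 2st) : s(t² + 1) : s(t² − 1) + 4t) satisfies the homogeneous equation (x² + y² + z²)² + (x + iy)²w² − z²w² = 0. -/
open Complex in
theorem cyclide_parametrization (s t : ℂ) :
    ((t ^ 2 - 1) ^ 2 + (I * (t ^ 2 - 1 - 2 * s * t)) ^ 2 + (s * (t ^ 2 + 1)) ^ 2) ^ 2 +
      ((t ^ 2 - 1) + I * (I * (t ^ 2 - 1 - 2 * s * t))) ^ 2 * (s * (t ^ 2 - 1) + 4 * t) ^ 2 -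
      (s * (t ^ 2 + 1)) ^ 2 * (s * (t ^ 2 - 1) + 4 * t) ^ 2 = 0 := by
  have h4 : (I : ℂ) ^ 4 = 1 := by
    rw [show (4:ℕ) = 2 * 2 from rfl, pow_mul, Complex.I_sq]; ring
  ring_nf
  simp only [h4, Complex.I_sq]
  ring
end

section
/- Two distinct circles in ℝ³ that have exactly two distinct common points are cospherical: there exists a sphere or a plane containing both circles. -/
open Module RealInnerProductSpace

private lemma aux_orth_span (P : Submodule ℝ (EuclideanSpace ℝ (Fin 3)))
    (hP : Module.finrank ℝ P = 2) :
    ∃ n : EuclideanSpace ℝ (Fin 3), n ≠ 0 ∧ Pᗮ = ℝ ∙ n := by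
  have htot : finrank ℝ (EuclideanSpace ℝ (Fin 3)) = 3 := finrank_euclideanSpace_fin
  have h := Submodule.finrank_add_finrank_orthogonal (K := P) (𝕜 := ℝ)
  rw [hP, htot] at h
  have h1 : finrank ℝ Pᗮ = 1 := by omega
  have hbot : Pᗮ ≠ ⊥ := by intro hb; rw [hb] at h1; simp at h1
  obtain ⟨n, hn, hn0⟩ := Submodule.exists_mem_ne_zero_of_ne_bot hbot
  refine ⟨n, hn0, ?_⟩
  refine (Submodule.eq_of_le_of_finrank_eq ((Submodule.span_singleton_le_iff_mem _ _).2 hn) ?_).symm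
  rw [h1, finrank_span_singleton hn0]

private lemma aux_pyth (P : AffineSubspace ℝ (EuclideanSpace ℝ (Fin 3)))
    (c x o : EuclideanSpace ℝ (Fin 3)) (hc : c ∈ P) (hx : x ∈ P)
    (ho : o - c ∈ P.directionᗮ) : dist x o ^ 2 = dist x c ^ 2 + ‖o - c‖ ^ 2 := by
  have hxc : x - c ∈ P.direction := by
    have := AffineSubspace.vsub_mem_direction hx hc
    rwa [vsub_eq_sub] at this
  have hinner : (inner ℝ (x - c) (o - c) : ℝ) = 0 := (Submodule.mem_orthogonal _ _).1 ho _ hxc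
  have hxo : x - o = (x - c) - (o - c) := by abel
  rw [dist_eq_norm, dist_eq_norm, hxo, norm_sub_sq_real, hinner]
  ring

/-- Two distinct circles in ℝ³ with exactly two common points are cospherical:
some sphere or plane contains both. -/
theorem two_circles_with_two_common_points_cospherical
    (c₁ c₂ : EuclideanSpace ℝ (Fin 3)) (r₁ r₂ : ℝ) (hr₁ : 0 < r₁) (hr₂ : 0 < r₂)
    (P₁ P₂ : AffineSubspace ℝ (EuclideanSpace ℝ (Fin 3)))
    (hP₁ : Module.finrank ℝ P₁.direction = 2)
    (hP₂ : Module.finrank ℝ P₂.direction = 2)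
    (hc₁ : c₁ ∈ P₁) (hc₂ : c₂ ∈ P₂)
    (C₁ C₂ : Set (EuclideanSpace ℝ (Fin 3)))
    (hC₁ : C₁ = {p | p ∈ P₁ ∧ dist p c₁ = r₁})
    (hC₂ : C₂ = {p | p ∈ P₂ ∧ dist p c₂ = r₂})
    (hne : C₁ ≠ C₂)
    (p q : EuclideanSpace ℝ (Fin 3)) (hpq : p ≠ q)
    (hint : C₁ ∩ C₂ = {p, q}) :
    (∃ (o : EuclideanSpace ℝ (Fin 3)) (R : ℝ), 0 < R ∧
        C₁ ∪ C₂ ⊆ Metric.sphere o R) ∨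
    (∃ Q : AffineSubspace ℝ (EuclideanSpace ℝ (Fin 3)),
        Module.finrank ℝ Q.direction = 2 ∧ C₁ ∪ C₂ ⊆ (Q : Set (EuclideanSpace ℝ (Fin 3)))) := by
  have hpmem : p ∈ C₁ ∩ C₂ := by rw [hint]; left; rfl
  have hqmem : q ∈ C₁ ∩ C₂ := by rw [hint]; right; rfl
  have hp₁ : p ∈ P₁ ∧ dist p c₁ = r₁ := by have := hpmem.1; rwa [hC₁] at this
  have hp₂ : p ∈ P₂ ∧ dist p c₂ = r₂ := by have := hpmem.2; rwa [hC₂] at this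
  have hq₁ : q ∈ P₁ ∧ dist q c₁ = r₁ := by have := hqmem.1; rwa [hC₁] at this
  have hq₂ : q ∈ P₂ ∧ dist q c₂ = r₂ := by have := hqmem.2; rwa [hC₂] at this
  by_cases hdir : P₁.direction = P₂.direction
  · right
    have hP : P₁ = P₂ := AffineSubspace.ext_of_direction_eq hdir ⟨p, hp₁.1, hp₂.1⟩
    refine ⟨P₁, hP₁, ?_⟩
    rintro x (hx | hx)
    · rw [hC₁] at hx; exact hx.1
    · rw [hC₂] at hx; rw [hP]; exact hx.1
  · left
    obtain ⟨n₁, hn₁0, hn₁⟩ := aux_orth_span P₁.direction hP₁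
    obtain ⟨n₂, hn₂0, hn₂⟩ := aux_orth_span P₂.direction hP₂
    have hn₁mem : n₁ ∈ P₁.directionᗮ := by
      rw [hn₁]; exact Submodule.mem_span_singleton_self n₁
    have hn₂mem : n₂ ∈ P₂.directionᗮ := by
      rw [hn₂]; exact Submodule.mem_span_singleton_self n₂
    -- spans of n₁ and n₂ are distinct
    have hspan_ne : (ℝ ∙ n₁) ≠ (ℝ ∙ n₂) := by
      intro h
      apply hdir
      rw [← Submodule.orthogonal_orthogonal P₁.direction,
        ← Submodule.orthogonal_orthogonal P₂.direction, hn₁, hn₂, h]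
    have hn₂notin : n₂ ∉ (ℝ ∙ n₁) := by
      intro h
      apply hspan_ne
      refine (Submodule.eq_of_le_of_finrank_eq
        ((Submodule.span_singleton_le_iff_mem _ _).2 h) ?_).symm
      rw [finrank_span_singleton hn₁0, finrank_span_singleton hn₂0]
    have hli : LinearIndependent ℝ ![n₁, n₂] := by
      rw [LinearIndependent.pair_iff' hn₁0]
      intro a ha
      apply hn₂notin
      rw [← ha]
      exact Submodule.smul_mem _ a (Submodule.mem_span_singleton_self n₁)
    -- the perpendicular-bisector plane direction
    set v := q - p with hv
    have hv0 : v ≠ 0 := sub_ne_zero.2 (Ne.symm hpq)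
    have hv₁ : v ∈ P₁.direction := by
      have := AffineSubspace.vsub_mem_direction hq₁.1 hp₁.1
      rwa [vsub_eq_sub] at this
    have hv₂ : v ∈ P₂.direction := by
      have := AffineSubspace.vsub_mem_direction hq₂.1 hp₂.1
      rwa [vsub_eq_sub] at this
    have hWrank : finrank ℝ ((ℝ ∙ v)ᗮ : Submodule ℝ (EuclideanSpace ℝ (Fin 3))) = 2 := by
      have htot : finrank ℝ (EuclideanSpace ℝ (Fin 3)) = 3 := finrank_euclideanSpace_fin
      have h := Submodule.finrank_add_finrank_orthogonal (K := (ℝ ∙ v)) (𝕜 := ℝ)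
      rw [htot, finrank_span_singleton hv0] at h
      omega
    have hn₁W : n₁ ∈ (ℝ ∙ v)ᗮ := by
      rw [Submodule.mem_orthogonal_singleton_iff_inner_right]
      exact (Submodule.mem_orthogonal _ _).1 hn₁mem _ hv₁
    have hn₂W : n₂ ∈ (ℝ ∙ v)ᗮ := by
      rw [Submodule.mem_orthogonal_singleton_iff_inner_right]
      exact (Submodule.mem_orthogonal _ _).1 hn₂mem _ hv₂
    have hspan : Submodule.span ℝ {n₁, n₂} = (ℝ ∙ v)ᗮ := by
      refine Submodule.eq_of_le_of_finrank_eq ?_ ?_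
      · rw [Submodule.span_le]
        rintro x (rfl | rfl)
        · exact hn₁W
        · exact hn₂W
      · rw [hWrank]
        have : ({n₁, n₂} : Set (EuclideanSpace ℝ (Fin 3))) = Set.range ![n₁, n₂] := by
          ext x
          simp [Fin.exists_fin_two]
          tauto
        rw [this, finrank_span_eq_card hli, Fintype.card_fin]
    -- c₂ - c₁ lies in W
    have hcW : c₂ - c₁ ∈ (ℝ ∙ v)ᗮ := by
      rw [Submodule.mem_orthogonal_singleton_iff_inner_right]
      have e₁ : (inner ℝ (p - c₁) (p - c₁) : ℝ) = (inner ℝ (q - c₁) (q - c₁) : ℝ) := by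
        rw [real_inner_self_eq_norm_sq, real_inner_self_eq_norm_sq,
          ← dist_eq_norm, ← dist_eq_norm, hp₁.2, hq₁.2]
      have e₂ : (inner ℝ (p - c₂) (p - c₂) : ℝ) = (inner ℝ (q - c₂) (q - c₂) : ℝ) := by
        rw [real_inner_self_eq_norm_sq, real_inner_self_eq_norm_sq,
          ← dist_eq_norm, ← dist_eq_norm, hp₂.2, hq₂.2]
      have h1 := real_inner_comm p c₁
      have h2 := real_inner_comm q c₁
      have h3 := real_inner_comm p c₂
      have h4 := real_inner_comm q c₂
      simp only [inner_sub_left, inner_sub_right, hv] at e₁ e₂ ⊢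
      linarith
    obtain ⟨a, b, hab⟩ := Submodule.mem_span_pair.1 (hspan ▸ hcW)
    set o := c₁ + a • n₁ with ho
    have ho₁ : o - c₁ = a • n₁ := by rw [ho]; abel
    have ho₂ : o - c₂ = -(b • n₂) := by
      have hc2 : c₂ = c₁ + (a • n₁ + b • n₂) := by rw [hab]; abel
      rw [ho, hc2]; abel
    have key₁ : ∀ x ∈ C₁, dist x o ^ 2 = r₁ ^ 2 + ‖a • n₁‖ ^ 2 := by
      intro x hx
      rw [hC₁] at hx
      have := aux_pyth P₁ c₁ x o hc₁ hx.1 (by rw [ho₁]; exact Submodule.smul_mem _ a hn₁mem)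
      rw [this, hx.2, ho₁]
    have key₂ : ∀ x ∈ C₂, dist x o ^ 2 = r₂ ^ 2 + ‖b • n₂‖ ^ 2 := by
      intro x hx
      rw [hC₂] at hx
      have := aux_pyth P₂ c₂ x o hc₂ hx.1
        (by rw [ho₂]; exact Submodule.neg_mem _ (Submodule.smul_mem _ b hn₂mem))
      rw [this, hx.2, ho₂, norm_neg]
    set R := dist p o with hR
    have hRsq₁ : R ^ 2 = r₁ ^ 2 + ‖a • n₁‖ ^ 2 := key₁ p hpmem.1
    have hRsq₂ : R ^ 2 = r₂ ^ 2 + ‖b • n₂‖ ^ 2 := key₂ p hpmem.2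
    have hRpos : 0 < R := by
      rcases (dist_nonneg : (0:ℝ) ≤ R).lt_or_eq with h | h
      · exact h
      · exfalso; have : R ^ 2 = 0 := by rw [hR, ← h]; ring
        rw [hRsq₁] at this
        nlinarith [sq_nonneg ‖a • n₁‖]
    refine ⟨o, R, hRpos, ?_⟩
    rintro x (hx | hx) <;> rw [Metric.mem_sphere]
    · have h := key₁ x hx
      rw [← hRsq₁] at h
      calc dist x o = Real.sqrt (dist x o ^ 2) := (Real.sqrt_sq dist_nonneg).symm
        _ = Real.sqrt (R ^ 2) := by rw [h]
        _ = R := Real.sqrt_sq dist_nonneg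
    · have h := key₂ x hx
      rw [← hRsq₂] at h
      calc dist x o = Real.sqrt (dist x o ^ 2) := (Real.sqrt_sq dist_nonneg).symm
        _ = Real.sqrt (R ^ 2) := by rw [h]
        _ = R := Real.sqrt_sq dist_nonneg
end
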